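/- Let D be a loop-free digraph with a k-degeneracy order v_1, ..., v_n (each v_j has indegree or outdegree at most k in the subdigraph induced on {v_1,...,v_j}). Then for any assignment of lists L(v) of size at least k+1 to the vertices, D admits an L-coloring in which no directed cycle is monochromatic. -/

import Mathlib

/-- A directed cycle of length `n` in the digraph with arc relation `A`:
an injective map `f : ZMod n → V` with an arc from each vertex to the next. -/
def IsDicycle {V : Type*} (A : V → V → Prop) (n : ℕ) (f : ZMod n → V) : Prop :=
  0 < n ∧ Function.Injective f ∧ ∀ i, A (f i) (f (i + 1))

/-- A set of vertices is acyclic if it contains no directed cycle. -/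
def AcyclicSet {V : Type*} (A : V → V → Prop) (S : Set V) : Prop :=
  ∀ (n : ℕ) (f : ZMod n → V), (∀ i, f i ∈ S) → ¬ IsDicycle A n f

/-- The dichromatic number: least `k` such that the vertices can be colored with `k`
colors with every color class acyclic. -/
noncomputable def dichromatic {V : Type*} (A : V → V → Prop) : ℕ :=
  sInf {k | ∃ c : V → Fin k, ∀ i, AcyclicSet A (c ⁻¹' {i})}

/-- The maximum size of an acyclic set of vertices. -/
noncomputable def maxAcyclic {V : Type*} [Fintype V] (A : V → V → Prop) : ℕ :=
  sSup {k | ∃ S : Finset V, AcyclicSet A ↑S ∧ S.card = k}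

/-- A loop-free digraph with a `k`-degeneracy order (given by an enumeration
`e` of the vertices in which each vertex has indegree or outdegree at most `k` in the
subdigraph induced on it and the earlier vertices) is list-colorable from any lists of
size at least `k+1` with no monochromatic directed cycle. -/
theorem stmt1 {V : Type*} [Fintype V] [DecidableEq V] (A : V → V → Prop) [DecidableRel A]
    (hirr : Irreflexive A) (k : ℕ) (e : Fin (Fintype.card V) ≃ V)
    (hdeg : ∀ j : Fin (Fintype.card V),
      (Finset.univ.filter (fun i : Fin (Fintype.card V) => i ≤ j ∧ A (e i) (e j))).card ≤ k ∨
      (Finset.univ.filter (fun i : Fin (Fintype.card V) => i ≤ j ∧ A (e j) (e i))).card ≤ k)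
    (L : V → Finset ℕ) (hL : ∀ v, k + 1 ≤ (L v).card) :
    ∃ c : V → ℕ, (∀ v, c v ∈ L v) ∧ ∀ col : ℕ, AcyclicSet A (c ⁻¹' {col}) := by
  classical
  set Din : Fin (Fintype.card V) → Finset (Fin (Fintype.card V)) :=
    fun j => Finset.univ.filter (fun i => i < j ∧ A (e i) (e j)) with hDin
  set Dout : Fin (Fintype.card V) → Finset (Fin (Fintype.card V)) :=
    fun j => Finset.univ.filter (fun i => i < j ∧ A (e j) (e i)) with hDout
  set danger : Fin (Fintype.card V) → Finset (Fin (Fintype.card V)) :=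
    fun j => if (Din j).card ≤ k then Din j else Dout j with hdanger
  have hsub : ∀ j, Din j ⊆ Finset.univ.filter
      (fun i : Fin (Fintype.card V) => i ≤ j ∧ A (e i) (e j)) := by
    intro j i hi
    simp only [hDin, Finset.mem_filter] at hi ⊢
    exact ⟨Finset.mem_univ _, le_of_lt hi.2.1, hi.2.2⟩
  have hsub' : ∀ j, Dout j ⊆ Finset.univ.filter
      (fun i : Fin (Fintype.card V) => i ≤ j ∧ A (e j) (e i)) := by
    intro j i hi
    simp only [hDout, Finset.mem_filter] at hi ⊢
    exact ⟨Finset.mem_univ _, le_of_lt hi.2.1, hi.2.2⟩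
  have hdc : ∀ j, (danger j).card ≤ k := by
    intro j
    by_cases h : (Din j).card ≤ k
    · simpa [hdanger, h] using h
    · rcases hdeg j with h1 | h2
      · exact absurd (le_trans (Finset.card_le_card (hsub j)) h1) h
      · simp only [hdanger, if_neg h]
        exact le_trans (Finset.card_le_card (hsub' j)) h2
  have hdlt : ∀ j, ∀ i ∈ danger j, i < j := by
    intro j i hi
    simp only [hdanger] at hi
    split at hi <;> simp only [hDin, hDout, Finset.mem_filter] at hi <;> exact hi.2.1
  have key : ∀ m : ℕ, ∃ c : Fin (Fintype.card V) → ℕ, ∀ j : Fin (Fintype.card V), (j : ℕ) < m →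
      c j ∈ L (e j) ∧ ∀ i ∈ danger j, c i ≠ c j := by
    intro m
    induction m with
    | zero => exact ⟨fun _ => 0, fun j h => absurd h (by omega)⟩
    | succ m ih =>
      obtain ⟨c, hc⟩ := ih
      by_cases hm : m < Fintype.card V
      · set jm : Fin (Fintype.card V) := ⟨m, hm⟩ with hjm
        have hex : (L (e jm) \ (danger jm).image c).Nonempty := by
          rw [← Finset.card_pos]
          have h1 : ((danger jm).image c).card ≤ k :=
            le_trans (Finset.card_image_le) (hdc jm)
          have h2 := hL (e jm)
          have := Finset.le_card_sdiff ((danger jm).image c) (L (e jm))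
          omega
        obtain ⟨x, hx⟩ := hex
        rw [Finset.mem_sdiff] at hx
        refine ⟨Function.update c jm x, fun j hj => ?_⟩
        rcases lt_or_eq_of_le (Nat.lt_succ_iff.mp hj) with hlt | heq
        · have hjlt : j < jm := by rw [Fin.lt_def]; exact hlt
          rw [Function.update_of_ne (ne_of_lt hjlt)]
          refine ⟨(hc j hlt).1, fun i hi => ?_⟩
          rw [Function.update_of_ne (ne_of_lt (lt_trans (hdlt j i hi) hjlt))]
          exact (hc j hlt).2 i hi
        · have hje : j = jm := Fin.ext heq
          rw [hje, Function.update_self]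
          refine ⟨hx.1, fun i hi => ?_⟩
          rw [Function.update_of_ne (ne_of_lt (hdlt jm i hi))]
          intro hcix
          exact hx.2 (Finset.mem_image.mpr ⟨i, hi, hcix⟩)
      · refine ⟨c, fun j hj => hc j ?_⟩
        have := j.isLt; omega
  obtain ⟨c, hc⟩ := key (Fintype.card V)
  have hc' : ∀ j, c j ∈ L (e j) ∧ ∀ i ∈ danger j, c i ≠ c j := fun j => hc j j.isLt
  refine ⟨fun v => c (e.symm v), fun v => by simpa using (hc' (e.symm v)).1, ?_⟩
  intro col n f hf ⟨hn, hinj, harc⟩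
  haveI : NeZero n := ⟨hn.ne'⟩
  have hcol : ∀ i : ZMod n, c (e.symm (f i)) = col := fun i => hf i
  rcases eq_or_lt_of_le (show 1 ≤ n from hn) with h1 | h2
  · have hs : Subsingleton (ZMod n) := by rw [← h1]; infer_instance
    have h0 : (0 : ZMod n) + 1 = 0 := Subsingleton.elim _ _
    have := harc 0
    rw [h0] at this
    exact hirr _ this
  · set g : ZMod n → Fin (Fintype.card V) := fun i => e.symm (f i) with hg
    have hginj : Function.Injective g := fun a b h => hinj (e.symm.injective h)
    obtain ⟨i0, -, hmax⟩ := Finset.exists_max_image (Finset.univ : Finset (ZMod n))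
      (fun i => (g i : ℕ)) ⟨0, Finset.mem_univ 0⟩
    have hone : (1 : ZMod n) ≠ 0 := by
      haveI : Fact (1 < n) := ⟨h2⟩
      exact one_ne_zero
    have hlt1 : g (i0 - 1) < g i0 := by
      have hle := hmax (i0 - 1) (Finset.mem_univ _)
      have hne : g (i0 - 1) ≠ g i0 := fun h => hone (sub_eq_self.mp (hginj h))
      exact lt_of_le_of_ne (by exact_mod_cast hle) hne
    have hlt2 : g (i0 + 1) < g i0 := by
      have hle := hmax (i0 + 1) (Finset.mem_univ _)
      have hne : g (i0 + 1) ≠ g i0 := fun h => hone (by simpa using add_eq_left.mp (hginj h))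
      exact lt_of_le_of_ne (by exact_mod_cast hle) hne
    have harc1 : A (e (g (i0 - 1))) (e (g i0)) := by
      have := harc (i0 - 1)
      simpa [hg, sub_add_cancel] using this
    have harc2 : A (e (g i0)) (e (g (i0 + 1))) := by
      have := harc i0
      simpa [hg] using this
    by_cases hside : (Din (g i0)).card ≤ k
    · have hmem : g (i0 - 1) ∈ danger (g i0) := by
        simp only [hdanger]; rw [if_pos hside]; simp only [hDin, Finset.mem_filter]
        exact ⟨Finset.mem_univ _, hlt1, harc1⟩
      exact (hc' (g i0)).2 _ hmem (by rw [hcol, hcol])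
    · have hmem : g (i0 + 1) ∈ danger (g i0) := by
        simp only [hdanger]; rw [if_neg hside]; simp only [hDout, Finset.mem_filter]
        exact ⟨Finset.mem_univ _, hlt2, harc2⟩
      exact (hc' (g i0)).2 _ hmem (by rw [hcol, hcol])
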